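/- Let k > 0 and χ > 0. There exists ε₀ > 0 (for instance ε₀ = min(1/2, k/(4χ))) such that for every ε ∈ (0, ε₀) the regularized free energy ψ_ε(r) = ψ_{e,ε}(r) + ψ_{e,ε}(1−r) + χ r(1−r) satisfies growth conditions of type (eq. (27)) with exponent p = 2: there exist constants M₁, M₂, M₃, M₄, M₅ > 0 (depending on ε) such that, for every r ∈ ℝ, −M₁ + M₂ r² ≤ ψ_ε(r) ≤ M₃ + M₄ r² and |ψ_ε'(r)| ≤ M₅ (1 + |r|). -/

import Mathlib

/-- Elliott–Luckhaus regularization of the entropic contribution `k r log r`. -/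
noncomputable def psiEeps (k ε r : ℝ) : ℝ :=
  if ε ≤ r then k * r * Real.log r
  else k * r * Real.log ε + k / 2 * (r ^ 2 / ε - ε)

/-- Regularized regular-solution free energy. -/
noncomputable def psiEps (k χ ε r : ℝ) : ℝ :=
  psiEeps k ε r + psiEeps k ε (1 - r) + χ * r * (1 - r)

noncomputable def psiDeriv (k ε r : ℝ) : ℝ :=
  if ε ≤ r then k * (Real.log r + 1) else k * Real.log ε + k * r / ε

lemma psiEeps_hasDerivAt (k ε : ℝ) (hε : 0 < ε) (r : ℝ) :
    HasDerivAt (psiEeps k ε) (psiDeriv k ε r) r := by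
  have h1 : ∀ x : ℝ, 0 < x → HasDerivAt (fun y => k * y * Real.log y) (k * (Real.log x + 1)) x := by
    intro x hx
    have hlog := Real.hasDerivAt_log hx.ne'
    have := ((hasDerivAt_id x).const_mul k).mul hlog
    refine this.congr_deriv ?_
    simp only [id]
    field_simp
  have h2 : ∀ x : ℝ, HasDerivAt (fun y => k * y * Real.log ε + k / 2 * (y ^ 2 / ε - ε))
      (k * Real.log ε + k * x / ε) x := by
    intro x
    have hsq : HasDerivAt (fun y : ℝ => y ^ 2) (2 * x) x := by
      simpa using hasDerivAt_pow 2 x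
    have hA : HasDerivAt (fun y => k * y * Real.log ε) (k * Real.log ε) x := by
      have := ((hasDerivAt_id x).const_mul k).mul_const (Real.log ε)
      simpa [mul_comm, mul_assoc] using this
    have hB : HasDerivAt (fun y : ℝ => k / 2 * (y ^ 2 / ε - ε)) (k / 2 * (2 * x / ε)) x := by
      have := ((hsq.div_const ε).sub_const ε).const_mul (k / 2)
      simpa using this
    have := hA.add hB
    refine this.congr_deriv ?_
    field_simp
  rcases lt_trichotomy r ε with hr | hr | hr
  · have heq : psiEeps k ε =ᶠ[nhds r] fun y => k * y * Real.log ε + k / 2 * (y ^ 2 / ε - ε) := by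
      filter_upwards [Iio_mem_nhds hr] with x hx
      simp [psiEeps, not_le.mpr (show x < ε from hx)]
    have := (h2 r).congr_of_eventuallyEq heq
    simpa [psiDeriv, not_le.mpr hr] using this
  · have hr' : ε = r := hr.symm
    subst hr'
    have hIci : HasDerivWithinAt (psiEeps k ε) (k * (Real.log ε + 1)) (Set.Ici ε) ε := by
      refine ((h1 ε hε).hasDerivWithinAt).congr (fun x hx => ?_) ?_
      · simp [psiEeps, if_pos (show ε ≤ x from hx)]
      · simp [psiEeps]
    have hIic : HasDerivWithinAt (psiEeps k ε) (k * (Real.log ε + 1)) (Set.Iic ε) ε := by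
      have key : HasDerivWithinAt (fun y => k * y * Real.log ε + k / 2 * (y ^ 2 / ε - ε))
          (k * (Real.log ε + 1)) (Set.Iic ε) ε := by
        have := (h2 ε).hasDerivWithinAt (s := Set.Iic ε)
        refine this.congr_deriv ?_
        field_simp
      refine key.congr (fun x hx => ?_) ?_
      · rcases eq_or_lt_of_le (show x ≤ ε from hx) with h | h
        · have h'' : ε = x := h.symm
          subst h''
          have : ε ^ 2 / ε = ε := by field_simp
          simp [psiEeps, this]
        · simp [psiEeps, not_le.mpr h]
      · have : ε ^ 2 / ε = ε := by field_simp
        simp [psiEeps, this]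
    have := hIic.union hIci
    rw [Set.Iic_union_Ici, hasDerivWithinAt_univ] at this
    simpa [psiDeriv, le_refl] using this
  · have heq : psiEeps k ε =ᶠ[nhds r] fun y => k * y * Real.log y := by
      filter_upwards [Ioi_mem_nhds hr] with x hx
      simp [psiEeps, if_pos (le_of_lt (show ε < x from hx))]
    have := (h1 r (hε.trans hr)).congr_of_eventuallyEq heq
    simpa [psiDeriv, le_of_lt hr] using this

lemma psiEps_deriv (k χ ε : ℝ) (hε : 0 < ε) (r : ℝ) :
    deriv (psiEps k χ ε) r = psiDeriv k ε r - psiDeriv k ε (1 - r) + (χ - 2 * χ * r) := by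
  have h1 := psiEeps_hasDerivAt k ε hε r
  have hinner : HasDerivAt (fun y : ℝ => 1 - y) (-1) r := by
    simpa using (hasDerivAt_id r).const_sub 1
  have h2 : HasDerivAt (fun y => psiEeps k ε (1 - y)) (psiDeriv k ε (1 - r) * (-1)) r :=
    (psiEeps_hasDerivAt k ε hε (1 - r)).comp r hinner
  have h3 : HasDerivAt (fun y => χ * y * (1 - y)) (χ * (1 - r) + χ * r * (-1)) r := by
    have := ((hasDerivAt_id r).const_mul χ).mul hinner
    exact this.congr_deriv (by simp)
  have := (h1.add h2).add h3
  have h4 : HasDerivAt (psiEps k χ ε)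
      (psiDeriv k ε r - psiDeriv k ε (1 - r) + (χ - 2 * χ * r)) r := by
    exact this.congr_deriv (by ring)
  exact h4.deriv

-- bounds on psiDeriv
lemma psiDeriv_bound (k ε : ℝ) (hk : 0 < k) (hε : 0 < ε) (hε1 : ε < 1) (r : ℝ) :
    |psiDeriv k ε r| ≤ (k * (1 + |Real.log ε|) + k / ε) * (1 + |r|) := by
  have hL : 0 ≤ |Real.log ε| := abs_nonneg _
  have hC1 : 0 < k / ε := div_pos hk hε
  unfold psiDeriv
  split_ifs with h
  · -- ε ≤ r, so r > 0
    have hr : 0 < r := lt_of_lt_of_le hε h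
    have hlog : |Real.log r| ≤ |Real.log ε| + |r| := by
      rcases le_or_gt 0 (Real.log r) with hl | hl
      · rw [abs_of_nonneg hl]
        have := Real.log_le_sub_one_of_pos hr
        have : Real.log r ≤ r := (Real.log_le_sub_one_of_pos hr).trans (by linarith)
        have hra : r ≤ |r| := le_abs_self r
        linarith
      · rw [abs_of_neg hl]
        have hle : Real.log ε ≤ Real.log r := Real.log_le_log hε h
        have hlε : Real.log ε < 0 := Real.log_neg hε hε1
        have : |Real.log ε| = -Real.log ε := abs_of_neg hlε
        have hra : 0 ≤ |r| := abs_nonneg r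
        linarith
    have : |k * (Real.log r + 1)| ≤ k * (|Real.log r| + 1) := by
      rw [abs_mul, abs_of_pos hk]
      have : |Real.log r + 1| ≤ |Real.log r| + 1 := by
        calc |Real.log r + 1| ≤ |Real.log r| + |(1:ℝ)| := abs_add_le _ _
        _ = |Real.log r| + 1 := by simp
      nlinarith
    have hra : 0 ≤ |r| := abs_nonneg r
    nlinarith [mul_le_mul_of_nonneg_left hlog hk.le,
      mul_nonneg (mul_nonneg hk.le hL) hra, mul_nonneg hC1.le hra]
  · -- r < ε
    have : |k * Real.log ε + k * r / ε| ≤ k * |Real.log ε| + (k / ε) * |r| := by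
      calc |k * Real.log ε + k * r / ε| ≤ |k * Real.log ε| + |k * r / ε| := abs_add_le _ _
      _ = k * |Real.log ε| + (k / ε) * |r| := by
          rw [abs_mul, abs_of_pos hk]
          congr 1
          rw [abs_div, abs_mul, abs_of_pos hk, abs_of_pos hε]
          ring
    have hra : 0 ≤ |r| := abs_nonneg r
    nlinarith [mul_nonneg hk.le hra, mul_nonneg (mul_nonneg hk.le hL) hra]

-- upper bound of psiEeps
lemma psiEeps_upper (k ε : ℝ) (hk : 0 < k) (hε : 0 < ε) (r : ℝ) :
    psiEeps k ε r ≤ (k * |Real.log ε| + 1) + (k + k * |Real.log ε| + k / (2 * ε)) * r ^ 2 := by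
  have hL : 0 ≤ |Real.log ε| := abs_nonneg _
  have hC : 0 < k / (2 * ε) := div_pos hk (by linarith)
  unfold psiEeps
  split_ifs with h
  · have hr : 0 < r := lt_of_lt_of_le hε h
    have hlog : Real.log r ≤ r := (Real.log_le_sub_one_of_pos hr).trans (by linarith)
    have : k * r * Real.log r ≤ k * r * r :=
      mul_le_mul_of_nonneg_left hlog (by positivity)
    nlinarith [sq_nonneg r, mul_nonneg (mul_nonneg hk.le hL) (sq_nonneg r),
      mul_nonneg hC.le (sq_nonneg r), mul_nonneg hk.le hL]
  · have h1 : k * r * Real.log ε ≤ k * |r| * |Real.log ε| := by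
      have : r * Real.log ε ≤ |r * Real.log ε| := le_abs_self _
      rw [abs_mul] at this
      nlinarith
    have h2 : |r| ≤ (1 + r ^ 2) / 2 := by nlinarith [sq_nonneg (|r| - 1), sq_abs r]
    have h3 : k / 2 * (r ^ 2 / ε - ε) ≤ k / (2 * ε) * r ^ 2 := by
      have heq : k / 2 * (r ^ 2 / ε - ε) = k / (2 * ε) * r ^ 2 - k * ε / 2 := by
        field_simp
      rw [heq]
      nlinarith [mul_pos hk hε]
    nlinarith [sq_abs r, abs_nonneg r, mul_nonneg (mul_nonneg hk.le hL) (sq_nonneg r),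
      mul_nonneg hk.le hL,
      mul_le_mul_of_nonneg_left h2 (mul_nonneg hk.le hL)]

-- lower bounds of psiEeps
lemma psiEeps_lower_right (k ε : ℝ) (hk : 0 < k) (hε : 0 < ε) (r : ℝ) (h : ε ≤ r) :
    -k ≤ psiEeps k ε r := by
  have hr : 0 < r := lt_of_lt_of_le hε h
  have hlog : 1 - r⁻¹ ≤ Real.log r := Real.one_sub_inv_le_log_of_pos hr
  have : r - 1 ≤ r * Real.log r := by
    have := mul_le_mul_of_nonneg_left hlog (le_of_lt hr)
    have hinv : r * (1 - r⁻¹) = r - 1 := by field_simp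
    linarith [hinv ▸ this]
  unfold psiEeps
  rw [if_pos h]
  nlinarith

lemma psiEeps_lower_left (k ε : ℝ) (hk : 0 < k) (hε : 0 < ε) (r : ℝ) (h : r < ε) :
    -(k * ε * |Real.log ε| ^ 2 + k * ε / 2) + k / (4 * ε) * r ^ 2 ≤ psiEeps k ε r := by
  set L := |Real.log ε| with hLdef
  have hL : 0 ≤ L := abs_nonneg _
  have h1 : -(k * |r| * L) ≤ k * r * Real.log ε := by
    have : -(|r| * L) ≤ r * Real.log ε := by
      rw [hLdef, ← abs_mul]
      exact neg_abs_le _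
    nlinarith
  have key : k * |r| * L ≤ k / (4 * ε) * r ^ 2 + k * ε * L ^ 2 := by
    have h4 : 4 * ε * (k * |r| * L) ≤ 4 * ε * (k / (4 * ε) * r ^ 2 + k * ε * L ^ 2) := by
      have heq : 4 * ε * (k / (4 * ε) * r ^ 2) = k * r ^ 2 := by
        field_simp
      nlinarith [mul_nonneg hk.le (sq_nonneg (|r| - 2 * ε * L)), sq_abs r]
    exact le_of_mul_le_mul_left h4 (by positivity)
  have heq2 : k / 2 * (r ^ 2 / ε - ε) = 2 * (k / (4 * ε) * r ^ 2) - k * ε / 2 := by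
    field_simp
    ring
  rw [psiEeps, if_neg (not_le.mpr h), heq2]
  linarith


set_option maxHeartbeats 1600000 in
/-- For small enough `ε`, the regularized regular-solution free energy satisfies the
polynomial growth conditions with exponent `p = 2`. -/
theorem regularized_free_energy_quadratic_growth
    (k χ : ℝ) (hk : 0 < k) (hχ : 0 < χ) :
    ∃ ε₀ > (0 : ℝ), ∀ ε : ℝ, 0 < ε → ε < ε₀ →
      ∃ M₁ M₂ M₃ M₄ M₅ : ℝ,
        0 < M₁ ∧ 0 < M₂ ∧ 0 < M₃ ∧ 0 < M₄ ∧ 0 < M₅ ∧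
        ∀ r : ℝ,
          (-M₁ + M₂ * r ^ 2 ≤ psiEps k χ ε r) ∧
          (psiEps k χ ε r ≤ M₃ + M₄ * r ^ 2) ∧
          |deriv (psiEps k χ ε) r| ≤ M₅ * (1 + |r|) := by
  refine ⟨min (1/2) (k / (16 * χ)), by positivity, ?_⟩
  intro ε hε hεlt
  have hε1 : ε < 1/2 := lt_of_lt_of_le hεlt (min_le_left _ _)
  have hε2 : ε < k / (16 * χ) := lt_of_lt_of_le hεlt (min_le_right _ _)
  have hε1' : ε < 1 := by linarith
  obtain ⟨L, hL0, hLdef⟩ : ∃ L, 0 ≤ L ∧ L = |Real.log ε| := ⟨_, abs_nonneg _, rfl⟩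
  obtain ⟨d, hd0, hddef⟩ : ∃ d, 0 < d ∧ d = k / (8 * ε) := ⟨_, by positivity, rfl⟩
  have hid4 : k / (4 * ε) = 2 * d := by rw [hddef]; ring
  have hid2 : k / (2 * ε) = 4 * d := by rw [hddef]; ring
  have hid1 : k / ε = 8 * d := by rw [hddef]; ring
  have hM2 : 0 < d - 2 * χ := by
    rw [hddef, sub_pos, lt_div_iff₀ (by positivity)]
    rw [lt_div_iff₀ (by positivity)] at hε2
    nlinarith
  have hM1 : 0 < 2 * (k + k * ε * L ^ 2 + k * ε / 2) + χ + (d - 2 * χ) + 2 * d + 1 := by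
    have h1 : (0:ℝ) ≤ k * ε * L ^ 2 := by positivity
    nlinarith
  refine ⟨2 * (k + k * ε * L ^ 2 + k * ε / 2) + χ + (d - 2 * χ) + 2 * d + 1,
      d - 2 * χ,
      2 * (k * L + 1) + 2 * (k + k * L + 4 * d) + χ,
      3 * (k + k * L + 4 * d) + χ,
      3 * (k * (1 + L) + 8 * d) + 2 * χ + 1,
      hM1, hM2, by nlinarith, by nlinarith, by nlinarith, ?_⟩
  intro r
  have hra : (0:ℝ) ≤ |r| := abs_nonneg r
  have hkεL : (0:ℝ) ≤ k * ε * L ^ 2 := by positivity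
  refine ⟨?_, ?_, ?_⟩
  · -- lower bound
    by_cases hc1 : r < ε
    · have hf1 := psiEeps_lower_left k ε hk hε r hc1
      rw [← hLdef, hid4] at hf1
      have h1r : ε ≤ 1 - r := by linarith
      have hf2 := psiEeps_lower_right k ε hk hε (1 - r) h1r
      have hent : -(χ + 2 * χ * r ^ 2) ≤ χ * r * (1 - r) := by
        nlinarith [mul_nonneg hχ.le (sq_nonneg (2 * r + 1))]
      rw [psiEps]
      nlinarith [mul_nonneg hd0.le (sq_nonneg r)]
    · by_cases hc2 : 1 - r < ε
      · have hrε : ε ≤ r := not_lt.mp hc1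
        have hf1 := psiEeps_lower_right k ε hk hε r hrε
        have hf2 := psiEeps_lower_left k ε hk hε (1 - r) hc2
        rw [← hLdef, hid4] at hf2
        have hsq : r ^ 2 / 2 - 1 ≤ (1 - r) ^ 2 := by nlinarith [sq_nonneg (r - 2)]
        have hent : -(χ + 2 * χ * r ^ 2) ≤ χ * r * (1 - r) := by
          nlinarith [mul_nonneg hχ.le (sq_nonneg (2 * r + 1))]
        rw [psiEps]
        nlinarith [mul_le_mul_of_nonneg_left hsq (by linarith : (0:ℝ) ≤ 2 * d)]
      · have hrε : ε ≤ r := not_lt.mp hc1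
        have h1r : ε ≤ 1 - r := not_lt.mp hc2
        have hf1 := psiEeps_lower_right k ε hk hε r hrε
        have hf2 := psiEeps_lower_right k ε hk hε (1 - r) h1r
        have hr0 : 0 < r := lt_of_lt_of_le hε hrε
        have hent : 0 ≤ χ * r * (1 - r) :=
          mul_nonneg (mul_nonneg hχ.le hr0.le) (by linarith)
        have hr2 : r ^ 2 ≤ 1 := by nlinarith
        rw [psiEps]
        nlinarith [mul_le_mul_of_nonneg_left hr2 hM2.le]
  · -- upper bound
    have hup1 := psiEeps_upper k ε hk hε r
    have hup2 := psiEeps_upper k ε hk hε (1 - r)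
    rw [← hLdef, hid2] at hup1 hup2
    have hsq : (1 - r) ^ 2 ≤ 2 + 2 * r ^ 2 := by nlinarith [sq_nonneg (1 + r)]
    have hent : χ * r * (1 - r) ≤ χ * (1 + r ^ 2) := by
      nlinarith [mul_nonneg hχ.le (sq_nonneg (4 * r - 1))]
    rw [psiEps]
    nlinarith [mul_le_mul_of_nonneg_left hsq (by positivity : (0:ℝ) ≤ k + k * L + 4 * d)]
  · -- derivative bound
    rw [psiEps_deriv k χ ε hε r]
    have hd1 := psiDeriv_bound k ε hk hε hε1' r
    have hd2 := psiDeriv_bound k ε hk hε hε1' (1 - r)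
    rw [← hLdef, hid1] at hd1 hd2
    have habs : |psiDeriv k ε r - psiDeriv k ε (1 - r) + (χ - 2 * χ * r)| ≤
        |psiDeriv k ε r| + |psiDeriv k ε (1 - r)| + |χ - 2 * χ * r| := by
      calc _ ≤ |psiDeriv k ε r - psiDeriv k ε (1 - r)| + |χ - 2 * χ * r| := abs_add_le _ _
      _ ≤ _ := by linarith [abs_sub (psiDeriv k ε r) (psiDeriv k ε (1 - r))]
    have h1r : |1 - r| ≤ 1 + |r| := by
      calc |1 - r| ≤ |(1:ℝ)| + |r| := abs_sub _ _
      _ = 1 + |r| := by simp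
    have hχr : |χ - 2 * χ * r| ≤ χ + 2 * χ * |r| := by
      calc |χ - 2 * χ * r| ≤ |χ| + |2 * χ * r| := abs_sub _ _
      _ = χ + 2 * χ * |r| := by
          rw [abs_of_pos hχ, abs_mul, abs_mul, abs_of_pos hχ]
          simp
    have hC0 : (0:ℝ) ≤ k * (1 + L) + 8 * d := by nlinarith [mul_nonneg hk.le hL0]
    nlinarith [mul_le_mul_of_nonneg_left h1r hC0, mul_nonneg hC0 hra]
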